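/- Let (X,S) be an X3C instance. Construct the following allocation instance on a path: for each k ∈ {1,…,s}, a path P_{S_k} = (v_{S_k,1}, v_{S_k,2}, v_{S_k,3}) and a path B_k of 2r+2s vertices b_k^1,…,b_k^{2r+2s}; the graph G is the single path obtained by concatenating, in order, P_{S_1}, B_1, P_{S_2}, B_2, …, P_{S_s}, B_s. The agents all have binary additive valuations: for each x ∈ X, agent i_x approves exactly the items v_{S,j} with S^j = x; for each k ∈ {1,…,s−r}, agent d_k approves exactly all items v_{S,j} (S ∈ S, j ∈ {1,2,3}); and for each k ∈ {1,…,s}, agent z_k approves exactly the 2r+2s vertices of B_k (so there are 2r+2s agents in total). Then mms_{z_k} = 1 for every k ∈ {1,…,s}, and in every MMS connected allocation π: (i) for each k ∈ {1,…,s}, the bundle π(z_k) contains at least one vertex of B_k, and (ii) each agent in {i_x : x ∈ X} ∪ {d_1,…,d_{s−r}} receives a bundle that intersects at most one of the paths P_{S_1},…,P_{S_s}. -/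

import Mathlib

open Finset

/-- A finite set of items is *connected* in the item graph `G` if the induced
subgraph is preconnected (the empty set counts as connected). -/
def ConnSet {V : Type*} (G : SimpleGraph V) (X : Finset V) : Prop :=
  (G.induce (X : Set V)).Preconnected

/-- `π` is a connected allocation of the items in `R` among the agents in `N`. -/
def IsConnAllocOn {V N : Type*} [DecidableEq V] (G : SimpleGraph V)
    (R : Finset V) (π : N → Finset V) : Prop :=
  (∀ i, π i ⊆ R) ∧ (∀ i, ConnSet G (π i)) ∧
    (∀ i j, i ≠ j → Disjoint (π i) (π j)) ∧ (∀ v ∈ R, ∃ i, v ∈ π i)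

/-- `π` is a connected allocation of all items among the agents in `N`. -/
def IsConnAlloc {V N : Type*} [Fintype V] [DecidableEq V] (G : SimpleGraph V)
    (π : N → Finset V) : Prop :=
  IsConnAllocOn G Finset.univ π

/-- `π'` is a Pareto-improvement of `π`. -/
def ParetoImproves {V N : Type*} (u : N → Finset V → ℝ)
    (π' π : N → Finset V) : Prop :=
  (∀ i, u i (π i) ≤ u i (π' i)) ∧ ∃ i, u i (π i) < u i (π' i)

/-- `π` is Pareto-optimal: no connected allocation Pareto-improves it. -/
def ParetoOptimal {V N : Type*} [Fintype V] [DecidableEq V] (G : SimpleGraph V)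
    (u : N → Finset V → ℝ) (π : N → Finset V) : Prop :=
  ∀ π', IsConnAlloc G π' → ¬ ParetoImproves u π' π

/-- `π` satisfies EF1: any envy can be removed by deleting a single item
(keeping the envied bundle connected). -/
def EF1 {V N : Type*} [Fintype V] [DecidableEq V] (G : SimpleGraph V)
    (u : N → Finset V → ℝ) (π : N → Finset V) : Prop :=
  ∀ i j, u i (π j) ≤ u i (π i) ∨
    ∃ v ∈ π j, ConnSet G ((π j).erase v) ∧ u i ((π j).erase v) ≤ u i (π i)

/-- The maximin fair share of an agent with valuation `u`, when the items are
divided into `|N|` connected bundles. -/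
noncomputable def mmsVal {V : Type*} (N : Type*) [Fintype V] [DecidableEq V]
    (G : SimpleGraph V) (u : Finset V → ℝ) : ℝ :=
  sSup {x : ℝ | ∃ P : N → Finset V, IsConnAlloc G P ∧
    x = sInf (Set.range fun j => u (P j))}

/-- `π` is an MMS allocation: every agent gets at least her maximin fair share. -/
def IsMMS {V N : Type*} [Fintype V] [DecidableEq V] (G : SimpleGraph V)
    (u : N → Finset V → ℝ) (π : N → Finset V) : Prop :=
  ∀ i, mmsVal N G (u i) ≤ u i (π i)

/-- the X3C path instance for PO & MMS. The path has
`s * (2r + 2s + 3)` vertices (encoded as `Fin (s * (2*r + 2*s + 3))`),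
obtained by concatenating, for `k = 1,…,s`, the 3-path `P_{S_k}` (positions
`vS k j`) followed by the `(2r+2s)`-path `B_k` (positions `bpos k t`).
Agents are `Sum.inl x` (agent `i_x`), `Sum.inr (Sum.inl k)` (dummy `d_k`) and
`Sum.inr (Sum.inr k)` (agent `z_k`), with binary additive valuations given by
the approval sets `A`. Then `mms_{z_k} = 1` for all `k`, and in every MMS
connected allocation each `z_k` gets a vertex of `B_k` and each agent
`i_x`/`d_k` gets a bundle meeting at most one of the paths `P_{S_1},…,P_{S_s}`. -/
lemma connSet_mem_of_between {n : ℕ} {X : Finset (Fin n)}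
    (hX : ConnSet (SimpleGraph.pathGraph n) X)
    {a b c : Fin n} (ha : a ∈ X) (hb : b ∈ X)
    (h1 : (a : ℕ) ≤ (c : ℕ)) (h2 : (c : ℕ) ≤ (b : ℕ)) : c ∈ X := by
  obtain ⟨w⟩ := hX ⟨a, by simpa using ha⟩ ⟨b, by simpa using hb⟩
  have H : ∀ (u v : ↑(X : Set (Fin n)))
      (_ : ((SimpleGraph.pathGraph n).induce (X : Set (Fin n))).Walk u v)
      (c : Fin n), (((u : Fin n) : ℕ) ≤ c ∧ (c : ℕ) ≤ ((v : Fin n) : ℕ)) ∨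
        (((v : Fin n) : ℕ) ≤ c ∧ (c : ℕ) ≤ ((u : Fin n) : ℕ)) → c ∈ X := by
    intro u v w
    induction w with
    | nil =>
      rename_i u
      intro c hc
      have : c = (u : Fin n) := by apply Fin.ext; omega
      rw [this]; exact Finset.mem_coe.mp u.2
    | @cons x y z h p ih =>
      intro c hc
      have hadj : ((x : Fin n) : ℕ) + 1 = ((y : Fin n) : ℕ) ∨
          ((y : Fin n) : ℕ) + 1 = ((x : Fin n) : ℕ) :=
        SimpleGraph.pathGraph_adj.mp h
      by_cases hcase : (((y : Fin n) : ℕ) ≤ c ∧ (c : ℕ) ≤ ((z : Fin n) : ℕ)) ∨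
          (((z : Fin n) : ℕ) ≤ c ∧ (c : ℕ) ≤ ((y : Fin n) : ℕ))
      · exact ih c hcase
      · have : (c : ℕ) = ((x : Fin n) : ℕ) ∨ (c : ℕ) = ((y : Fin n) : ℕ) := by omega
        rcases this with h' | h'
        · have : c = (x : Fin n) := Fin.ext h'
          rw [this]; exact Finset.mem_coe.mp x.2
        · have : c = (y : Fin n) := Fin.ext h'
          rw [this]; exact Finset.mem_coe.mp y.2
  exact H _ _ w c (Or.inl ⟨h1, h2⟩)

lemma interval_conn {n : ℕ} (X : Finset (Fin n))
    (hX : ∀ a ∈ X, ∀ b ∈ X, ∀ c : Fin n, (a : ℕ) ≤ c → (c : ℕ) ≤ b → c ∈ X) :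
    ConnSet (SimpleGraph.pathGraph n) X := by
  have key : ∀ d : ℕ, ∀ u v : ↑(X : Set (Fin n)),
      ((v : Fin n) : ℕ) - ((u : Fin n) : ℕ) = d → ((u : Fin n) : ℕ) ≤ ((v : Fin n) : ℕ) →
      ((SimpleGraph.pathGraph n).induce (X : Set (Fin n))).Reachable u v := by
    intro d
    induction d with
    | zero =>
      intro u v h hle
      have : u = v := Subtype.ext (Fin.ext (by omega))
      rw [this]
    | succ d ih =>
      intro u v h hle
      have hun : ((u : Fin n) : ℕ) + 1 < n := by
        have := ((v : Fin n)).isLt; omega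
      have hu'X : (⟨((u : Fin n) : ℕ) + 1, hun⟩ : Fin n) ∈ X := by
        refine hX _ (Finset.mem_coe.mp u.2) _ (Finset.mem_coe.mp v.2) _ ?_ ?_ <;>
          simp <;> rw [← Subtype.coe_lt_coe, Fin.lt_iff_val_lt_val] <;> omega
      have hadj : ((SimpleGraph.pathGraph n).induce (X : Set (Fin n))).Adj u
          ⟨⟨((u : Fin n) : ℕ) + 1, hun⟩, by simpa using hu'X⟩ := by
        show (SimpleGraph.pathGraph n).Adj _ _
        rw [SimpleGraph.pathGraph_adj]
        left; rfl
      refine hadj.reachable.trans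
        (ih ⟨⟨((u : Fin n) : ℕ) + 1, hun⟩, by simpa using hu'X⟩ v ?_ ?_) <;>
        dsimp only <;> omega
  intro u v
  rcases le_or_gt ((u : Fin n) : ℕ) ((v : Fin n) : ℕ) with h | h
  · exact key _ u v rfl h
  · exact (key _ v u rfl h.le).symm

def cutF (m T b t : ℕ) : ℕ := if t = 0 then 0 else if t = m then T else b + 3 + t

lemma cutF_mono {m T b : ℕ} (hbT : b + 3 + m ≤ T) {t t' : ℕ} (h : t ≤ t')
    (h' : t' ≤ m) : cutF m T b t ≤ cutF m T b t' := by
  unfold cutF; split_ifs <;> first | omega | contradiction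

def iotaF (r s : ℕ) : (Fin (3 * r) ⊕ Fin (s - r) ⊕ Fin s) → ℕ
  | Sum.inl x => x
  | Sum.inr (Sum.inl d) => 3 * r + d
  | Sum.inr (Sum.inr k) => 3 * r + (s - r) + k

lemma iotaF_lt {r s : ℕ} (hrs : r ≤ s) (i) : iotaF r s i < 2 * r + 2 * s := by
  rcases i with x | d | k
  · have := x.isLt; simp [iotaF]; omega
  · have := d.isLt; simp [iotaF]; omega
  · have := k.isLt; simp [iotaF]; omega

lemma iotaF_inj {r s : ℕ} : Function.Injective (iotaF r s) := by
  intro i j h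
  rcases i with x | d | k <;> rcases j with x' | d' | k' <;>
    simp [iotaF] at h ⊢ <;>
    first
      | (exact Fin.ext h)
      | (exact Fin.ext (by omega))
      | (have := x.isLt; omega)
      | (have := x'.isLt; omega)
      | (have := d.isLt; omega)
      | (have := d'.isLt; omega)

lemma iotaF_surj {r s : ℕ} (hrs : r ≤ s) (t : ℕ) (ht : t < 2 * r + 2 * s) :
    ∃ i, iotaF r s i = t := by
  rcases Nat.lt_or_ge t (3 * r) with h | h
  · exact ⟨Sum.inl ⟨t, h⟩, rfl⟩
  rcases Nat.lt_or_ge t (3 * r + (s - r)) with h2 | h2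
  · exact ⟨Sum.inr (Sum.inl ⟨t - 3 * r, by omega⟩), by simp [iotaF]; omega⟩
  · exact ⟨Sum.inr (Sum.inr ⟨t - (3 * r + (s - r)), by omega⟩), by simp [iotaF]; omega⟩

theorem stmt15 (r s : ℕ) (hrs : r ≤ s)
    (S : Fin s → Fin 3 → Fin (3 * r)) (hS : ∀ k, Function.Injective (S k))
    (vS : Fin s → Fin 3 → Fin (s * (2 * r + 2 * s + 3)))
    (hvS : ∀ k j, (vS k j : ℕ) = (2 * r + 2 * s + 3) * (k : ℕ) + (j : ℕ))
    (bpos : Fin s → Fin (2 * r + 2 * s) → Fin (s * (2 * r + 2 * s + 3)))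
    (hbpos : ∀ k t, (bpos k t : ℕ) =
      (2 * r + 2 * s + 3) * (k : ℕ) + 3 + (t : ℕ))
    (A : (Fin (3 * r) ⊕ Fin (s - r) ⊕ Fin s) →
      Finset (Fin (s * (2 * r + 2 * s + 3))))
    (hAx : ∀ x, A (Sum.inl x) =
      Finset.univ.filter (fun v => ∃ k j, v = vS k j ∧ S k j = x))
    (hAd : ∀ k, A (Sum.inr (Sum.inl k)) =
      Finset.univ.filter (fun v => ∃ k' j, v = vS k' j))
    (hAz : ∀ k, A (Sum.inr (Sum.inr k)) =
      Finset.univ.filter (fun v => ∃ t, v = bpos k t))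
    (u : (Fin (3 * r) ⊕ Fin (s - r) ⊕ Fin s) →
      Finset (Fin (s * (2 * r + 2 * s + 3))) → ℝ)
    (hu : ∀ i X, u i X = ((X ∩ A i).card : ℝ)) :
    (∀ k : Fin s,
      mmsVal (Fin (3 * r) ⊕ Fin (s - r) ⊕ Fin s)
        (SimpleGraph.pathGraph (s * (2 * r + 2 * s + 3)))
        (u (Sum.inr (Sum.inr k))) = 1) ∧
    (∀ π : (Fin (3 * r) ⊕ Fin (s - r) ⊕ Fin s) →
        Finset (Fin (s * (2 * r + 2 * s + 3))),
      IsConnAlloc (SimpleGraph.pathGraph (s * (2 * r + 2 * s + 3))) π →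
      IsMMS (SimpleGraph.pathGraph (s * (2 * r + 2 * s + 3))) u π →
      (∀ k : Fin s, ∃ t, bpos k t ∈ π (Sum.inr (Sum.inr k))) ∧
      (∀ x : Fin (3 * r), ∀ k k' : Fin s,
        (∃ j, vS k j ∈ π (Sum.inl x)) → (∃ j, vS k' j ∈ π (Sum.inl x)) →
        k = k') ∧
      (∀ d : Fin (s - r), ∀ k k' : Fin s,
        (∃ j, vS k j ∈ π (Sum.inr (Sum.inl d))) →
        (∃ j, vS k' j ∈ π (Sum.inr (Sum.inl d))) → k = k')) := by

  classical
  have hbinj : ∀ k : Fin s, Function.Injective (bpos k) := by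
    intro k t t' h
    have h' := congrArg Fin.val h
    rw [hbpos, hbpos] at h'
    exact Fin.ext (by omega)
  have hAcard : ∀ k : Fin s, (A (Sum.inr (Sum.inr k))).card = 2 * r + 2 * s := by
    intro k
    have him : A (Sum.inr (Sum.inr k)) = Finset.image (bpos k) Finset.univ := by
      rw [hAz]; ext v; simp [eq_comm]
    rw [him, Finset.card_image_of_injective _ (hbinj k)]
    simp
  have hNcard : Fintype.card (Fin (3 * r) ⊕ Fin (s - r) ⊕ Fin s) = 2 * r + 2 * s := by
    simp; omega
  -- any disjoint family has a bundle with at most one approved item of z_k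
  have hone : ∀ (k : Fin s) (P : (Fin (3 * r) ⊕ Fin (s - r) ⊕ Fin s) →
      Finset (Fin (s * (2 * r + 2 * s + 3)))),
      (∀ i j, i ≠ j → Disjoint (P i) (P j)) →
      ∃ j, (P j ∩ A (Sum.inr (Sum.inr k))).card ≤ 1 := by
    intro k P hdisj
    by_contra hcon
    push_neg at hcon
    have h2 : 2 * Fintype.card (Fin (3 * r) ⊕ Fin (s - r) ⊕ Fin s) ≤
        ∑ j, (P j ∩ A (Sum.inr (Sum.inr k))).card := by
      calc 2 * Fintype.card (Fin (3 * r) ⊕ Fin (s - r) ⊕ Fin s)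
          = ∑ _j : Fin (3 * r) ⊕ Fin (s - r) ⊕ Fin s, 2 := by
            simp [Finset.sum_const, Finset.card_univ, Nat.mul_comm]
        _ ≤ ∑ j, (P j ∩ A (Sum.inr (Sum.inr k))).card :=
            Finset.sum_le_sum (fun j _ => by have := hcon j; omega)
    have h3 : ∑ j, (P j ∩ A (Sum.inr (Sum.inr k))).card ≤
        (A (Sum.inr (Sum.inr k))).card := by
      rw [← Finset.card_biUnion (fun i _ j _ hij =>
        Finset.disjoint_of_subset_left Finset.inter_subset_left
          (Finset.disjoint_of_subset_right Finset.inter_subset_left (hdisj i j hij)))]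
      exact Finset.card_le_card (Finset.biUnion_subset.mpr
        fun j _ => Finset.inter_subset_right)
    rw [hNcard] at h2
    rw [hAcard] at h3
    have hs : 0 < s := k.pos
    omega
  -- construction of a partition giving z_k value exactly 1 in every bundle
  have hconstr : ∀ k : Fin s, ∃ P : (Fin (3 * r) ⊕ Fin (s - r) ⊕ Fin s) →
      Finset (Fin (s * (2 * r + 2 * s + 3))),
      IsConnAlloc (SimpleGraph.pathGraph (s * (2 * r + 2 * s + 3))) P ∧
      ∀ j, (P j ∩ A (Sum.inr (Sum.inr k))).card = 1 := by
    intro k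
    have hs : 0 < s := k.pos
    have hbT : (2 * r + 2 * s + 3) * (k : ℕ) + 3 + (2 * r + 2 * s) ≤
        s * (2 * r + 2 * s + 3) := by
      have h1 : (2 * r + 2 * s + 3) * ((k : ℕ) + 1) ≤ (2 * r + 2 * s + 3) * s :=
        Nat.mul_le_mul_left _ k.isLt
      have h2 : s * (2 * r + 2 * s + 3) = (2 * r + 2 * s + 3) * s := Nat.mul_comm _ _
      have h3 : (2 * r + 2 * s + 3) * ((k : ℕ) + 1) =
          (2 * r + 2 * s + 3) * (k : ℕ) + (2 * r + 2 * s + 3) := Nat.mul_succ _ _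
      omega
    set P : (Fin (3 * r) ⊕ Fin (s - r) ⊕ Fin s) →
        Finset (Fin (s * (2 * r + 2 * s + 3))) := fun i =>
      Finset.univ.filter (fun v =>
        cutF (2 * r + 2 * s) (s * (2 * r + 2 * s + 3)) ((2 * r + 2 * s + 3) * (k : ℕ))
          (iotaF r s i) ≤ (v : ℕ) ∧
        (v : ℕ) < cutF (2 * r + 2 * s) (s * (2 * r + 2 * s + 3))
          ((2 * r + 2 * s + 3) * (k : ℕ)) (iotaF r s i + 1)) with hP
    have hPmem : ∀ i v, v ∈ P i ↔
        (cutF (2 * r + 2 * s) (s * (2 * r + 2 * s + 3)) ((2 * r + 2 * s + 3) * (k : ℕ))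
          (iotaF r s i) ≤ (v : ℕ) ∧
        (v : ℕ) < cutF (2 * r + 2 * s) (s * (2 * r + 2 * s + 3))
          ((2 * r + 2 * s + 3) * (k : ℕ)) (iotaF r s i + 1)) := by
      intro i v; rw [hP]; simp
    refine ⟨P, ⟨fun i => Finset.subset_univ _, ?_, ?_, ?_⟩, ?_⟩
    · -- connectivity
      intro i
      apply interval_conn
      intro a ha b' hb' c hac hcb
      rw [hPmem] at *
      omega
    · -- disjointness
      intro i j hij
      have hne : iotaF r s i ≠ iotaF r s j := fun h => hij (iotaF_inj h)
      rw [Finset.disjoint_left]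
      intro v hv hv'
      rw [hPmem] at hv hv'
      rcases Nat.lt_or_ge (iotaF r s i) (iotaF r s j) with h | h
      · have := cutF_mono hbT (show iotaF r s i + 1 ≤ iotaF r s j from h)
          (le_of_lt (iotaF_lt hrs j))
        omega
      · have := cutF_mono hbT (show iotaF r s j + 1 ≤ iotaF r s i by omega)
          (le_of_lt (iotaF_lt hrs i))
        omega
    · -- cover
      intro v _
      have hvlt : (v : ℕ) < s * (2 * r + 2 * s + 3) := v.isLt
      have hex : ∃ t, t < 2 * r + 2 * s ∧
          cutF (2 * r + 2 * s) (s * (2 * r + 2 * s + 3))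
            ((2 * r + 2 * s + 3) * (k : ℕ)) t ≤ (v : ℕ) ∧
          (v : ℕ) < cutF (2 * r + 2 * s) (s * (2 * r + 2 * s + 3))
            ((2 * r + 2 * s + 3) * (k : ℕ)) (t + 1) := by
        rcases Nat.lt_or_ge (v : ℕ) ((2 * r + 2 * s + 3) * (k : ℕ) + 4) with h1 | h1
        · refine ⟨0, by omega, ?_, ?_⟩ <;> (unfold cutF; split_ifs <;> first | omega | contradiction)
        rcases Nat.lt_or_ge (v : ℕ)
            ((2 * r + 2 * s + 3) * (k : ℕ) + 2 + (2 * r + 2 * s)) with h2 | h2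
        · refine ⟨(v : ℕ) - (2 * r + 2 * s + 3) * (k : ℕ) - 3, by omega, ?_, ?_⟩ <;>
            (unfold cutF; split_ifs <;> first | omega | contradiction)
        · refine ⟨2 * r + 2 * s - 1, by omega, ?_, ?_⟩ <;>
            (unfold cutF; split_ifs <;> first | omega | contradiction)
      obtain ⟨t, htm, ht1, ht2⟩ := hex
      obtain ⟨i, hi⟩ := iotaF_surj hrs t htm
      exact ⟨i, (hPmem i v).mpr (by rw [hi]; exact ⟨ht1, ht2⟩)⟩
    · -- value exactly one
      intro j
      have htm : iotaF r s j < 2 * r + 2 * s := iotaF_lt hrs j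
      have hinter : P j ∩ A (Sum.inr (Sum.inr k)) = {bpos k ⟨iotaF r s j, htm⟩} := by
        ext v
        rw [Finset.mem_inter, hPmem, hAz, Finset.mem_singleton]
        simp only [Finset.mem_filter, Finset.mem_univ, true_and]
        constructor
        · rintro ⟨⟨hc1, hc2⟩, t', rfl⟩
          have hval := hbpos k t'
          have ht'lt := t'.isLt
          have ht' : (t' : ℕ) = iotaF r s j := by
            revert hc1 hc2; unfold cutF; split_ifs <;> (intro hc1 hc2; first | omega | contradiction)
          congr 1
          exact Fin.ext ht'
        · rintro rfl
          have hval : ((bpos k ⟨iotaF r s j, htm⟩ : Fin (s * (2 * r + 2 * s + 3))) : ℕ) =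
              (2 * r + 2 * s + 3) * (k : ℕ) + 3 + iotaF r s j := by rw [hbpos]
          refine ⟨⟨?_, ?_⟩, ⟨iotaF r s j, htm⟩, rfl⟩ <;>
            (unfold cutF; split_ifs <;> first | omega | contradiction)
      rw [hinter, Finset.card_singleton]
  -- the mms value of each z_k is 1
  have hmms : ∀ k : Fin s,
      mmsVal (Fin (3 * r) ⊕ Fin (s - r) ⊕ Fin s)
        (SimpleGraph.pathGraph (s * (2 * r + 2 * s + 3)))
        (u (Sum.inr (Sum.inr k))) = 1 := by
    intro k
    have hNne : Nonempty (Fin (3 * r) ⊕ Fin (s - r) ⊕ Fin s) := ⟨Sum.inr (Sum.inr k)⟩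
    obtain ⟨P, hPalloc, hPval⟩ := hconstr k
    have h1mem : (1 : ℝ) ∈ {x : ℝ | ∃ P : (Fin (3 * r) ⊕ Fin (s - r) ⊕ Fin s) →
        Finset (Fin (s * (2 * r + 2 * s + 3))),
        IsConnAlloc (SimpleGraph.pathGraph (s * (2 * r + 2 * s + 3))) P ∧
        1 = sInf (Set.range fun j => u (Sum.inr (Sum.inr k)) (P j))} := by
      refine ⟨P, hPalloc, ?_⟩
      have hfun : (fun j => u (Sum.inr (Sum.inr k)) (P j)) = fun _ => (1 : ℝ) := by
        funext j; rw [hu, hPval j]; norm_num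
      rw [hfun, Set.range_const, csInf_singleton]
    have hub : ∀ x ∈ {x : ℝ | ∃ P : (Fin (3 * r) ⊕ Fin (s - r) ⊕ Fin s) →
        Finset (Fin (s * (2 * r + 2 * s + 3))),
        IsConnAlloc (SimpleGraph.pathGraph (s * (2 * r + 2 * s + 3))) P ∧
        x = sInf (Set.range fun j => u (Sum.inr (Sum.inr k)) (P j))}, x ≤ 1 := by
      rintro x ⟨Q, hQ, rfl⟩
      have hQdisj : ∀ i j, i ≠ j → Disjoint (Q i) (Q j) := hQ.2.2.1
      obtain ⟨j, hj⟩ := hone k Q hQdisj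
      have hle : u (Sum.inr (Sum.inr k)) (Q j) ≤ 1 := by
        rw [hu]; exact_mod_cast hj
      refine le_trans (csInf_le ⟨0, ?_⟩ ⟨j, rfl⟩) hle
      rintro y ⟨j', rfl⟩
      simp only [hu]
      positivity
    unfold mmsVal
    exact le_antisymm (csSup_le ⟨1, h1mem⟩ hub) (le_csSup ⟨1, hub⟩ h1mem)
  refine ⟨hmms, ?_⟩
  intro π hπ hM
  have hdisj : ∀ i j, i ≠ j → Disjoint (π i) (π j) := hπ.2.2.1
  have hi : ∀ k : Fin s, ∃ t, bpos k t ∈ π (Sum.inr (Sum.inr k)) := by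
    intro k
    have h1 : (1 : ℝ) ≤ u (Sum.inr (Sum.inr k)) (π (Sum.inr (Sum.inr k))) := by
      rw [← hmms k]; exact hM _
    rw [hu] at h1
    have hcard : 1 ≤ (π (Sum.inr (Sum.inr k)) ∩ A (Sum.inr (Sum.inr k))).card := by
      exact_mod_cast h1
    obtain ⟨v, hv⟩ := Finset.card_pos.mp hcard
    obtain ⟨hv1, hv2⟩ := Finset.mem_inter.mp hv
    rw [hAz] at hv2
    simp only [Finset.mem_filter, Finset.mem_univ, true_and] at hv2
    obtain ⟨t, rfl⟩ := hv2
    exact ⟨t, hv1⟩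
  have key : ∀ (i : Fin (3 * r) ⊕ Fin (s - r) ⊕ Fin s),
      (∀ k0 : Fin s, i ≠ Sum.inr (Sum.inr k0)) →
      ∀ k k' : Fin s, (k : ℕ) < (k' : ℕ) →
      (∃ j, vS k j ∈ π i) → (∃ j, vS k' j ∈ π i) → False := by
    rintro i hiz k k' hkk' ⟨j, hj⟩ ⟨j', hj'⟩
    obtain ⟨t0, ht0⟩ := hi k
    have hconn : ConnSet (SimpleGraph.pathGraph (s * (2 * r + 2 * s + 3))) (π i) :=
      hπ.2.1 i
    have hmul : (2 * r + 2 * s + 3) * ((k : ℕ) + 1) ≤ (2 * r + 2 * s + 3) * (k' : ℕ) :=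
      Nat.mul_le_mul_left _ hkk'
    have hmul2 : (2 * r + 2 * s + 3) * ((k : ℕ) + 1) =
        (2 * r + 2 * s + 3) * (k : ℕ) + (2 * r + 2 * s + 3) := Nat.mul_succ _ _
    have hv1 := hvS k j
    have hv2 := hvS k' j'
    have hv3 := hbpos k t0
    have hj3 := j.isLt
    have hj3' := j'.isLt
    have ht03 := t0.isLt
    have hmem : bpos k t0 ∈ π i :=
      connSet_mem_of_between hconn hj hj' (by omega) (by omega)
    exact (Finset.disjoint_left.mp (hdisj i _ (hiz k)) hmem) ht0
  refine ⟨hi, ?_, ?_⟩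
  · intro x k k' h1 h2
    by_contra hne
    rcases Nat.lt_trichotomy (k : ℕ) (k' : ℕ) with h | h | h
    · exact key (Sum.inl x) (by simp) k k' h h1 h2
    · exact hne (Fin.ext h)
    · exact key (Sum.inl x) (by simp) k' k h h2 h1
  · intro d k k' h1 h2
    by_contra hne
    rcases Nat.lt_trichotomy (k : ℕ) (k' : ℕ) with h | h | h
    · exact key (Sum.inr (Sum.inl d)) (by simp) k k' h h1 h2
    · exact hne (Fin.ext h)
    · exact key (Sum.inr (Sum.inl d)) (by simp) k' k h h2 h1
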